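/- Let Ĝ be the primal-dual completion of a map G on an orientable surface. An orientation of Ĝ is a Schnyder orientation (i.e. corresponds to an EDGE angle labeling of G) if and only if every closed walk W of the dual Ĝ* satisfies δ(W) ≡ 0 (mod 3), where δ(W) = (#out-edges crossing W left-to-right) − (#out-edges crossing W right-to-left). -/

import Mathlib

/-!
Combinatorial framework for flows and homology on a map on an orientable surface.

* A `Multigraph` is a set of edges with a fixed reference orientation (source/target);
  flows on it are elements of ℤ^E.
* A dart is an edge together with a direction of traversal (`true` = forward).
* `charFlow l` is the characteristic flow of a list of darts (a walk):
  #forward traversals − #backward traversals of each edge.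
* `beta p q = Σ_e p_e q_{e*}` is the pairing between flows on G and flows on its dual G*
  (dual flows are indexed by the same edge set via e ↦ e*).
* A `SurfaceMap` records, for each edge, the faces on its left and right, and for each
  face its counterclockwise facial walk; the dual graph G* has the faces as vertices and
  e* oriented from the face on the right of e to the face on the left.
* `GoodFacialWalks` is the defining geometric property of the ccw facial walks:
  the ccw facial walk of a face f uses e forward iff f is on the left of e.
* Two flows are homologous iff their difference lies in the subgroup generated by the
  characteristic flows of the ccw facial walks.
-/

structure Multigraph (V E : Type) where
  src : E → V
  tgt : E → V

namespace Multigraph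

variable {V E : Type}

def dtail (M : Multigraph V E) (d : E × Bool) : V := if d.2 then M.src d.1 else M.tgt d.1

def dhead (M : Multigraph V E) (d : E × Bool) : V := if d.2 then M.tgt d.1 else M.src d.1

/-- A closed walk: a nonempty list of darts, consecutively chained, wrapping around. -/
def IsClosedWalk (M : Multigraph V E) (l : List (E × Bool)) : Prop :=
  l ≠ [] ∧ l.Chain' (fun d d' => M.dhead d = M.dtail d') ∧
    ∀ d ∈ l.head?, ∀ d' ∈ l.getLast?, M.dhead d' = M.dtail d

end Multigraph

/-- Characteristic flow of a walk (list of darts). -/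
def charFlow {E : Type} [DecidableEq E] (l : List (E × Bool)) : E → ℤ :=
  fun e => (l.count (e, true) : ℤ) - (l.count (e, false) : ℤ)

/-- The bilinear pairing β between flows of G and flows of G*. -/
def beta {E : Type} [Fintype E] (p q : E → ℤ) : ℤ := ∑ e, p e * q e

structure SurfaceMap (V E F : Type) where
  G : Multigraph V E
  leftFace : E → F
  rightFace : E → F
  /-- the counterclockwise facial walk of each face -/
  facialWalk : F → List (E × Bool)

namespace SurfaceMap

variable {V E F : Type}

/-- The dual map G*: vertices are the faces of G, and e* goes from the face on the
right of e to the face on the left of e. -/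
def dual (M : SurfaceMap V E F) : Multigraph F E := ⟨M.rightFace, M.leftFace⟩

/-- The subgroup 𝔽 of ℤ^E generated by the ccw facial flows. -/
def FacialSubgroup [DecidableEq E] (M : SurfaceMap V E F) : AddSubgroup (E → ℤ) :=
  AddSubgroup.closure (Set.range fun f => charFlow (M.facialWalk f))

/-- Two flows are homologous iff their difference lies in 𝔽. -/
def Homologous [DecidableEq E] (M : SurfaceMap V E F) (p q : E → ℤ) : Prop :=
  p - q ∈ M.FacialSubgroup

/-- Geometric defining property of the ccw facial walks. -/
def GoodFacialWalks [DecidableEq E] [DecidableEq F] (M : SurfaceMap V E F) : Prop :=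
  (∀ f, M.G.IsClosedWalk (M.facialWalk f)) ∧
  ∀ f e, charFlow (M.facialWalk f) e =
    (if M.leftFace e = f then 1 else 0) - (if M.rightFace e = f then 1 else 0)

end SurfaceMap
/-!
The primal-dual completion Ĝ of a map G.  Ĝ is itself a map on the same surface; its
vertices are classified as primal-vertices, dual-vertices, and edge-vertices (of degree 4,
one on each edge of G), and every edge of Ĝ joins a primal- or dual-vertex to an
edge-vertex.  We fix the reference orientation of each edge of Ĝ to point from its
primal- or dual-vertex towards its edge-vertex.  Faces of Ĝ correspond to the angles of G.
-/

inductive PDKind | primal | dualv | edgev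
deriving DecidableEq

structure PDCompletion (V E F : Type) extends SurfaceMap V E F where
  kind : V → PDKind
  src_not_edgev : ∀ e, kind (G.src e) ≠ PDKind.edgev
  tgt_edgev : ∀ e, kind (G.tgt e) = PDKind.edgev

namespace PDCompletion

variable {V E F : Type}

/-- The characteristic flow of the set `Out` of out-edges of an orientation ρ of Ĝ
(`ρ e = true` means e is directed towards its edge-vertex, i.e. is an out-edge; out-edges
are taken with their actual direction, which is the reference one). -/
def outFlow {E : Type} (ρ : E → Bool) : E → ℤ := fun e => if ρ e then 1 else 0

/-- δ(W) = β(Out, W): #out-edges crossing the dual walk W from left to right minus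
#out-edges crossing it from right to left. -/
def delta [Fintype E] [DecidableEq E] (ρ : E → Bool) (W : List (E × Bool)) : ℤ :=
  beta (outFlow ρ) (charFlow W)

/-- Outdegree of a vertex of Ĝ in the orientation ρ. -/
def outdeg [Fintype E] [DecidableEq V] (M : PDCompletion V E F) (ρ : E → Bool) (v : V) : ℕ :=
  (Finset.univ.filter fun e =>
    (ρ e = true ∧ M.G.src e = v) ∨ (ρ e = false ∧ M.G.tgt e = v)).card

/-- Degree of a vertex of Ĝ. -/
def degree [Fintype E] [DecidableEq V] (M : PDCompletion V E F) (v : V) : ℕ :=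
  (Finset.univ.filter fun e => M.G.src e = v ∨ M.G.tgt e = v).card

/-- A mod₃-orientation of Ĝ: primal- and dual-vertices have outdegree ≡ 0 (mod 3),
edge-vertices have outdegree ≡ 1 (mod 3). -/
def IsMod3 [Fintype E] [DecidableEq V] (M : PDCompletion V E F) (ρ : E → Bool) : Prop :=
  ∀ v, if M.kind v = PDKind.edgev
    then M.outdeg ρ v ≡ 1 [MOD 3] else M.outdeg ρ v ≡ 0 [MOD 3]

/-- A Schnyder orientation of Ĝ: an orientation corresponding to an EDGE angle labeling
of G.  Faces of Ĝ are the angles of G; the labeling rule of the correspondence is that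
crossing a non-out-edge keeps the label and crossing an out-edge counterclockwise around
its primal- or dual-vertex increases the label by 1 (so ℓ(left face) = ℓ(right face) + 1
across an out-edge), and each edge-vertex has outdegree 1 or 4 (type 1/2 or type 0). -/
def IsSchnyderOrientation [Fintype E] [DecidableEq V] (M : PDCompletion V E F)
    (ρ : E → Bool) : Prop :=
  (∀ v, M.kind v = PDKind.edgev → M.outdeg ρ v = 1 ∨ M.outdeg ρ v = 4) ∧
  ∃ ℓ : F → ZMod 3, ∀ e,
    ℓ (M.leftFace e) = ℓ (M.rightFace e) + (if ρ e then 1 else 0)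

end PDCompletion

/-!
STATEMENT 9: An orientation of Ĝ is a Schnyder orientation (i.e. corresponds to an EDGE
angle labeling of G) if and only if every closed walk W of the dual Ĝ* satisfies
δ(W) ≡ 0 (mod 3), where δ(W) = (#out-edges crossing W left-to-right) − (#out-edges
crossing W right-to-left).

Background hypotheses record that Ĝ is a genuine primal-dual completion: its facial walks
are good, edge-vertices have degree 4, and the faces of Ĝ* are indexed by the vertices of
Ĝ with their defining flows.
-/

namespace SchnyderProof

open Multigraph

variable {V E F : Type}

def dflip (d : E × Bool) : E × Bool := (d.1, !d.2)

def dvalZ (ρ : E → Bool) (d : E × Bool) : ℤ :=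
  if d.2 then (if ρ d.1 then 1 else 0) else -(if ρ d.1 then 1 else 0)

def wsumZ (ρ : E → Bool) (l : List (E × Bool)) : ℤ := (l.map (dvalZ ρ)).sum

@[simp] lemma wsumZ_nil (ρ : E → Bool) : wsumZ ρ ([] : List (E × Bool)) = 0 := rfl

@[simp] lemma wsumZ_cons (ρ : E → Bool) (d : E × Bool) (l : List (E × Bool)) :
    wsumZ ρ (d :: l) = dvalZ ρ d + wsumZ ρ l := by simp [wsumZ]

@[simp] lemma wsumZ_append (ρ : E → Bool) (l l' : List (E × Bool)) :
    wsumZ ρ (l ++ l') = wsumZ ρ l + wsumZ ρ l' := by simp [wsumZ]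

@[simp] lemma dtail_dflip (N : Multigraph F E) (d : E × Bool) :
    N.dtail (dflip d) = N.dhead d := by
  obtain ⟨e, b⟩ := d; cases b <;> simp [dflip, Multigraph.dtail, Multigraph.dhead]

@[simp] lemma dhead_dflip (N : Multigraph F E) (d : E × Bool) :
    N.dhead (dflip d) = N.dtail d := by
  obtain ⟨e, b⟩ := d; cases b <;> simp [dflip, Multigraph.dtail, Multigraph.dhead]

@[simp] lemma dvalZ_dflip (ρ : E → Bool) (d : E × Bool) :
    dvalZ ρ (dflip d) = - dvalZ ρ d := by
  obtain ⟨e, b⟩ := d; cases b <;> simp [dflip, dvalZ]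

lemma wsumZ_flip_reverse (ρ : E → Bool) (l : List (E × Bool)) :
    wsumZ ρ ((l.map dflip).reverse) = - wsumZ ρ l := by
  induction l with
  | nil => simp
  | cons d l ih => simp [ih, add_comm]

inductive Walk (N : Multigraph F E) : F → F → List (E × Bool) → Prop
  | nil (f : F) : Walk N f f []
  | cons (d : E × Bool) {f' : F} {l : List (E × Bool)} :
      Walk N (N.dhead d) f' l → Walk N (N.dtail d) f' (d :: l)

lemma Walk.append {N : Multigraph F E} {f g h : F} {l l' : List (E × Bool)}
    (h1 : Walk N f g l) (h2 : Walk N g h l') : Walk N f h (l ++ l') := by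
  induction h1 with
  | nil => simpa
  | cons d hw ih => exact Walk.cons d (ih h2)

lemma Walk.reverse {N : Multigraph F E} {f g : F} {l : List (E × Bool)}
    (h1 : Walk N f g l) : Walk N g f ((l.map dflip).reverse) := by
  induction h1 with
  | nil => exact Walk.nil _
  | cons d hw ih =>
      simp only [List.map_cons, List.reverse_cons]
      refine ih.append ?_
      have : Walk N (N.dtail (dflip d)) (N.dhead (dflip d)) [dflip d] := by
        exact Walk.cons _ (Walk.nil _)
      simpa using this

lemma Walk.head_eq {N : Multigraph F E} {f g : F} {l : List (E × Bool)}
    (h1 : Walk N f g l) : ∀ d ∈ l.head?, N.dtail d = f := by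
  cases h1 with
  | nil => simp
  | cons d hw => simp

lemma Walk.chain' {N : Multigraph F E} {f g : F} {l : List (E × Bool)}
    (h1 : Walk N f g l) : l.Chain' (fun d d' => N.dhead d = N.dtail d') := by
  induction h1 with
  | nil => exact List.isChain_nil
  | cons d hw ih =>
      simp only [List.Chain', List.isChain_cons]
      exact ⟨fun b hb => (hw.head_eq b hb).symm, ih⟩

lemma Walk.nil_eq {N : Multigraph F E} {f g : F} (h : Walk N f g []) : f = g := by
  cases h; rfl

lemma Walk.last_eq {N : Multigraph F E} :
    ∀ {l : List (E × Bool)} {f g : F}, Walk N f g l → ∀ d ∈ l.getLast?, N.dhead d = g := by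
  intro l
  induction l with
  | nil => intro f g h d hd; simp at hd
  | cons d t ih =>
      intro f g h b hb
      cases h with
      | cons _ hw =>
        cases t with
        | nil =>
            simp at hb; subst hb
            exact hw.nil_eq
        | cons d' t' =>
            rw [List.getLast?_cons_cons] at hb
            exact ih hw b hb

lemma Walk.isClosedWalk {N : Multigraph F E} {f : F} {l : List (E × Bool)}
    (h1 : Walk N f f l) (hl : l ≠ []) : N.IsClosedWalk l := by
  refine ⟨hl, h1.chain', ?_⟩
  intro d hd d' hd'
  rw [h1.last_eq d' hd', h1.head_eq d hd]

lemma walk_of_chain' {N : Multigraph F E} :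
    ∀ (l : List (E × Bool)) (d : E × Bool),
      (d :: l).Chain' (fun a b => N.dhead a = N.dtail b) →
      Walk N (N.dtail d) (N.dhead ((d :: l).getLast (by simp))) (d :: l) := by
  intro l
  induction l with
  | nil => intro d _; exact Walk.cons _ (Walk.nil _)
  | cons d' t ih =>
      intro d hc
      simp only [List.Chain', List.isChain_cons_cons] at hc
      have h2 := ih d' hc.2
      rw [List.getLast_cons_cons]
      refine Walk.cons _ ?_
      rw [hc.1]
      exact h2

lemma exists_walk_of_closed {N : Multigraph F E} {l : List (E × Bool)}
    (h : N.IsClosedWalk l) : ∃ f, Walk N f f l := by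
  obtain ⟨hne, hc, hcl⟩ := h
  obtain ⟨d, t, rfl⟩ := List.exists_cons_of_ne_nil hne
  have hw := walk_of_chain' (N := N) t d hc
  have : N.dhead ((d :: t).getLast (by simp)) = N.dtail d := by
    apply hcl d (by simp)
    simp [List.getLast?_eq_getLast]
  rw [this] at hw
  exact ⟨_, hw⟩

lemma beta_charFlow_cons [Fintype E] [DecidableEq E] (p : E → ℤ)
    (d : E × Bool) (l : List (E × Bool)) :
    beta p (charFlow (d :: l)) = (if d.2 then p d.1 else -p d.1) + beta p (charFlow l) := by
  obtain ⟨e0, b⟩ := d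
  unfold beta charFlow
  have key : ∀ e : E, p e * ((List.count (e, true) ((e0, b) :: l) : ℤ)
        - (List.count (e, false) ((e0, b) :: l) : ℤ))
      = (if e = e0 then (if b then p e else -p e) else 0)
        + p e * ((List.count (e, true) l : ℤ) - (List.count (e, false) l : ℤ)) := by
    intro e
    by_cases he : e = e0 <;> cases b <;>
      simp [he, List.count_cons, Prod.ext_iff, eq_comm (a := e0)] <;> ring
  simp only [key]
  rw [Finset.sum_add_distrib, Finset.sum_ite_eq' Finset.univ e0]
  cases b <;> simp

lemma beta_charFlow_eq_wsumZ [Fintype E] [DecidableEq E] (ρ : E → Bool)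
    (l : List (E × Bool)) :
    beta (PDCompletion.outFlow ρ) (charFlow l) = wsumZ ρ l := by
  induction l with
  | nil => simp [beta, charFlow]
  | cons d l ih =>
      rw [beta_charFlow_cons, ih]
      obtain ⟨e, b⟩ := d
      cases b <;> simp [dvalZ, PDCompletion.outFlow]

lemma wsum_walk_cast (N : Multigraph F E) (ρ : E → Bool) (ℓ : F → ZMod 3)
    (hd : ∀ d : E × Bool, ((dvalZ ρ d : ℤ) : ZMod 3) = ℓ (N.dhead d) - ℓ (N.dtail d)) :
    ∀ {l : List (E × Bool)} {f g : F}, Walk N f g l →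
      ((wsumZ ρ l : ℤ) : ZMod 3) = ℓ g - ℓ f := by
  intro l f g h
  induction h with
  | nil => simp
  | cons d hw ih =>
      rw [wsumZ_cons]
      push_cast
      rw [hd d, ih]
      ring

lemma wsum_welldef (N : Multigraph F E) (ρ : E → Bool)
    (H : ∀ W, N.IsClosedWalk W → ((wsumZ ρ W : ℤ) : ZMod 3) = 0)
    {f g : F} {l1 l2 : List (E × Bool)}
    (h1 : Walk N f g l1) (h2 : Walk N f g l2) :
    ((wsumZ ρ l1 : ℤ) : ZMod 3) = ((wsumZ ρ l2 : ℤ) : ZMod 3) := by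
  have hw : Walk N f f (l1 ++ (l2.map dflip).reverse) := h1.append h2.reverse
  by_cases hl : l1 ++ (l2.map dflip).reverse = []
  · obtain ⟨ha, hb⟩ := List.append_eq_nil_iff.mp hl
    have hb' : l2 = [] := by simpa using hb
    rw [ha, hb']
  · have hz := H _ (hw.isClosedWalk hl)
    rw [wsumZ_append, wsumZ_flip_reverse] at hz
    push_cast at hz
    linear_combination hz

end SchnyderProof
open SchnyderProof
theorem schnyder_orientation_iff_delta_zero {V E F : Type}
    [Fintype V] [Fintype E] [DecidableEq V] [DecidableEq E] [DecidableEq F]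
    (M : PDCompletion V E F) (hM : M.toSurfaceMap.GoodFacialWalks)
    (h4 : ∀ v, M.kind v = PDKind.edgev → M.degree v = 4)
    (dualFacialWalk : V → List (E × Bool))
    (hdfc : ∀ v, M.toSurfaceMap.dual.IsClosedWalk (dualFacialWalk v))
    (hdff : ∀ v e, charFlow (dualFacialWalk v) e =
      (if M.G.src e = v then 1 else 0) - (if M.G.tgt e = v then 1 else 0))
    (ρ : E → Bool) :
    M.IsSchnyderOrientation ρ ↔
      ∀ W, M.toSurfaceMap.dual.IsClosedWalk W → PDCompletion.delta ρ W ≡ 0 [ZMOD 3] := by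
  classical
  set N := M.toSurfaceMap.dual with hN
  have hmodeq : ∀ a : ℤ, a ≡ 0 [ZMOD 3] ↔ ((a : ZMod 3) = 0) := by
    intro a
    rw [Int.modEq_zero_iff_dvd, ZMod.intCast_zmod_eq_zero_iff_dvd]
    norm_num
  constructor
  · rintro ⟨-, ℓ, hℓ⟩ W hW
    have hd : ∀ d : E × Bool, ((dvalZ ρ d : ℤ) : ZMod 3) = ℓ (N.dhead d) - ℓ (N.dtail d) := by
      rintro ⟨e, b⟩
      have h := hℓ e
      have e1 : N.dhead (e, false) = M.rightFace e := rfl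
      have e2 : N.dtail (e, false) = M.leftFace e := rfl
      have e3 : N.dhead (e, true) = M.leftFace e := rfl
      have e4 : N.dtail (e, true) = M.rightFace e := rfl
      cases b
      · rw [e1, e2, h]
        cases hb : ρ e <;> simp [dvalZ, hb]
      · rw [e3, e4, h]
        cases hb : ρ e <;> simp [dvalZ, hb]
    obtain ⟨f, hw⟩ := exists_walk_of_closed hW
    have hcast := wsum_walk_cast N ρ ℓ hd hw
    rw [hmodeq, PDCompletion.delta, beta_charFlow_eq_wsumZ, hcast]
    ring
  · intro H
    have H' : ∀ W, N.IsClosedWalk W → ((wsumZ ρ W : ℤ) : ZMod 3) = 0 := by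
      intro W hW
      have := (hmodeq _).mp (H W hW)
      rwa [PDCompletion.delta, beta_charFlow_eq_wsumZ] at this
    constructor
    · intro v hv
      have hsrc : ∀ e, M.G.src e ≠ v := fun e h => M.src_not_edgev e (h ▸ hv)
      have hδ : PDCompletion.delta ρ (dualFacialWalk v)
          = -(((Finset.univ.filter fun e => ρ e = true ∧ M.G.tgt e = v)).card : ℤ) := by
        rw [PDCompletion.delta]
        unfold beta
        have key : ∀ e : E, PDCompletion.outFlow ρ e * charFlow (dualFacialWalk v) e
            = -(if ρ e = true ∧ M.G.tgt e = v then (1 : ℤ) else 0) := by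
          intro e
          rw [hdff]
          by_cases h1 : ρ e <;> by_cases h2 : M.G.tgt e = v <;>
            simp [h1, h2, hsrc e, PDCompletion.outFlow]
        simp only [key]
        rw [Finset.sum_neg_distrib, Finset.sum_boole]
      have hdvd : (3 : ℤ) ∣ PDCompletion.delta ρ (dualFacialWalk v) :=
        Int.modEq_zero_iff_dvd.mp (H _ (hdfc v))
      rw [hδ, dvd_neg] at hdvd
      have hdvd' : 3 ∣ ((Finset.univ.filter fun e => ρ e = true ∧ M.G.tgt e = v)).card := by
        exact_mod_cast hdvd
      set s : Finset E := Finset.univ.filter (fun e => M.G.tgt e = v) with hs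
      have h1 : (Finset.univ.filter fun e => ρ e = true ∧ M.G.tgt e = v)
          = s.filter (fun e => ρ e = true) := by
        rw [hs, Finset.filter_filter]
        apply Finset.filter_congr
        intro e _
        tauto
      have h2 : M.outdeg ρ v = (s.filter (fun e => ¬ ρ e = true)).card := by
        rw [PDCompletion.outdeg, hs, Finset.filter_filter]
        congr 1
        apply Finset.filter_congr
        intro e _
        simp only [eq_iff_iff, Bool.not_eq_true]
        constructor
        · rintro (⟨ha, hb⟩ | ⟨ha, hb⟩)
          · exact absurd hb (hsrc e)
          · exact ⟨hb, ha⟩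
        · rintro ⟨ha, hb⟩
          exact Or.inr ⟨hb, ha⟩
      have h3 : s.card = 4 := by
        rw [← h4 v hv, PDCompletion.degree, hs]
        congr 1
        apply Finset.filter_congr
        intro e _
        simp [hsrc e]
      have hsum := Finset.card_filter_add_card_filter_not
        (s := s) (p := fun e => ρ e = true)
      rw [h1] at hdvd'
      rw [h2]
      omega
    · letI st : Setoid F := ⟨fun f g => ∃ l, Walk N f g l,
        ⟨fun f => ⟨[], Walk.nil f⟩,
         fun ⟨l, hl⟩ => ⟨_, hl.reverse⟩,
         fun ⟨l1, h1⟩ ⟨l2, h2⟩ => ⟨_, h1.append h2⟩⟩⟩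
      have hreach : ∀ f : F, ∃ l, Walk N (Quotient.mk st f).out f l :=
        fun f => Quotient.mk_out f
      refine ⟨fun f => ((wsumZ ρ (hreach f).choose : ℤ) : ZMod 3), ?_⟩
      intro e
      have hRL : Walk N (M.rightFace e) (M.leftFace e) [(e, true)] := by
        have h1 : Walk N (N.dtail (e, true)) (N.dhead (e, true)) [(e, true)] :=
          Walk.cons _ (Walk.nil _)
        simpa [Multigraph.dtail, Multigraph.dhead, hN, SurfaceMap.dual] using h1
      have hout : Quotient.mk st (M.rightFace e) = Quotient.mk st (M.leftFace e) :=
        Quotient.sound ⟨_, hRL⟩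
      have hL := (hreach (M.leftFace e)).choose_spec
      have hR := (hreach (M.rightFace e)).choose_spec
      have hR' : Walk N (Quotient.mk st (M.leftFace e)).out (M.leftFace e)
          ((hreach (M.rightFace e)).choose ++ [(e, true)]) := by
        rw [← hout]
        exact hR.append hRL
      have hkey := wsum_welldef N ρ H' hL hR'
      rw [wsumZ_append] at hkey
      push_cast at hkey
      beta_reduce
      rw [hkey]
      have hone : ((wsumZ ρ [(e, true)] : ℤ) : ZMod 3) = (if ρ e then 1 else 0) := by
        cases hb : ρ e <;> simp [wsumZ, dvalZ, hb]
      rw [hone]
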